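/- If a weakly realizable signed pattern contains consecutive entries with skip sizes a, x₁, x₂, …, x_k, b and signs ε₀, ε₁, …, ε_k, ε_{k+1}, then gcd(a, b) divides the signed intermediate sum ε₁x₁ + ε₂x₂ + … + ε_kx_k. In particular, if a = b then a divides ε₁x₁ + ε₂x₂ + … + ε_kx_k. -/
import Mathlib


/-- A signed pattern is a list of pairs `(ε, a)` with `ε ∈ {1, -1}` and `a` a positive skip size. -/
def IsSignedPattern (p : List (ℤ × ℕ)) : Prop :=
  ∀ e ∈ p, (e.1 = 1 ∨ e.1 = -1) ∧ 0 < e.2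

/-- The (signed) sum of the steps of a pattern. -/
def stepSum (p : List (ℤ × ℕ)) : ℤ :=
  (p.map (fun e => e.1 * (e.2 : ℤ))).sum

/-- The `i`-th term of the pattern started at `T`: `T_i = T + ε₁a₁ + ⋯ + εᵢaᵢ`. -/
def patTerm (T : ℤ) (p : List (ℤ × ℕ)) (i : ℕ) : ℤ :=
  T + stepSum (p.take i)

/-- The pattern `p` is weakly realized starting from `T`: `T` is a nonnegative integer, all terms
are nonnegative, and the left term of each step is an even multiple of its skip size when the
sign is `+1`, and an odd multiple when the sign is `-1`. -/
def WeaklyRealizableFrom (T : ℤ) (p : List (ℤ × ℕ)) : Prop :=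
  0 ≤ T ∧ (∀ i, i ≤ p.length → 0 ≤ patTerm T p i) ∧
    ∀ (i : ℕ) (h : i < p.length),
      ((p.get ⟨i, h⟩).1 = 1 → ∃ k : ℤ, patTerm T p i = 2 * k * ((p.get ⟨i, h⟩).2 : ℤ)) ∧
      ((p.get ⟨i, h⟩).1 = -1 → ∃ k : ℤ, patTerm T p i = (2 * k + 1) * ((p.get ⟨i, h⟩).2 : ℤ))

/-- A pattern is weakly realizable if it is weakly realized from some starting point. -/
def WeaklyRealizable (p : List (ℤ × ℕ)) : Prop :=
  ∃ T : ℤ, WeaklyRealizableFrom T p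

/-- A pattern is realizable if it is weakly realized from some starting point in such a way that
all of its terms `T₀, …, Tₙ` are pairwise distinct. -/
def Realizable (p : List (ℤ × ℕ)) : Prop :=
  ∃ T : ℤ, WeaklyRealizableFrom T p ∧
    ∀ i j : ℕ, i ≤ p.length → j ≤ p.length → i ≠ j → patTerm T p i ≠ patTerm T p j

lemma stepSum_append (l l' : List (ℤ × ℕ)) : stepSum (l ++ l') = stepSum l + stepSum l' := by
  simp [stepSum]

lemma get_mid {α : Type*} (l r : List α) (e : α) (i : ℕ) (hil : i = l.length)
    (h : i < (l ++ e :: r).length) : (l ++ e :: r)[i]'h = e := by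
  subst hil
  rw [List.getElem_append_right (Nat.le_refl _)]
  simp

/-- If a weakly realizable signed pattern contains consecutive entries with skip sizes
`a, x₁, …, x_k, b`, then `gcd(a, b)` divides the signed intermediate sum `ε₁x₁ + ⋯ + ε_kx_k`;
in particular, if `a = b` then `a` divides that sum. -/
theorem gcd_divides_intermediate_sum (l₁ l₂ m : List (ℤ × ℕ)) (εa εb : ℤ) (a b : ℕ)
    (hp : IsSignedPattern (l₁ ++ [(εa, a)] ++ m ++ [(εb, b)] ++ l₂))
    (h : WeaklyRealizable (l₁ ++ [(εa, a)] ++ m ++ [(εb, b)] ++ l₂)) :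
    ((Nat.gcd a b : ℤ) ∣ stepSum m) ∧ (a = b → (a : ℤ) ∣ stepSum m) := by
  obtain ⟨T, hT0, hnn, hmod⟩ := h
  set p := l₁ ++ [(εa, a)] ++ m ++ [(εb, b)] ++ l₂ with hp_def
  have hi : l₁.length < p.length := by simp [hp_def]
  have hj : l₁.length + 1 + m.length < p.length := by simp [hp_def]; omega
  have heq1 : p = l₁ ++ (εa, a) :: (m ++ (εb, b) :: l₂) := by simp [hp_def]
  have heq2 : p = (l₁ ++ (εa, a) :: m) ++ (εb, b) :: l₂ := by simp [hp_def]
  have hgeti : p.get ⟨l₁.length, hi⟩ = (εa, a) := by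
    rw [List.get_of_eq heq1, List.get_eq_getElem]
    exact get_mid _ _ _ _ rfl _
  have hgetj : p.get ⟨l₁.length + 1 + m.length, hj⟩ = (εb, b) := by
    rw [List.get_of_eq heq2, List.get_eq_getElem]
    exact get_mid _ _ _ _ (by simp; omega) _
  have hdiva : (a : ℤ) ∣ patTerm T p l₁.length := by
    obtain ⟨h1, h2⟩ := hmod l₁.length hi
    rw [hgeti] at h1 h2
    rcases (hp (εa, a) (by simp [hp_def])).1 with h' | h'
    · obtain ⟨k, hk⟩ := h1 h'; exact ⟨2 * k, by linarith⟩
    · obtain ⟨k, hk⟩ := h2 h'; exact ⟨2 * k + 1, by linarith⟩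
  have hdivb : (b : ℤ) ∣ patTerm T p (l₁.length + 1 + m.length) := by
    obtain ⟨h1, h2⟩ := hmod (l₁.length + 1 + m.length) hj
    rw [hgetj] at h1 h2
    rcases (hp (εb, b) (by simp [hp_def])).1 with h' | h'
    · obtain ⟨k, hk⟩ := h1 h'; exact ⟨2 * k, by linarith⟩
    · obtain ⟨k, hk⟩ := h2 h'; exact ⟨2 * k + 1, by linarith⟩
  have htake_i : p.take l₁.length = l₁ := by
    rw [heq1, List.take_left' rfl]
  have htake_j : p.take (l₁.length + 1 + m.length) = l₁ ++ (εa, a) :: m := by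
    rw [heq2, List.take_left' (by simp; omega)]
  have hsum : patTerm T p (l₁.length + 1 + m.length)
      = patTerm T p l₁.length + εa * a + stepSum m := by
    rw [patTerm, patTerm, htake_i, htake_j]
    have : l₁ ++ (εa, a) :: m = l₁ ++ [(εa, a)] ++ m := by simp
    rw [this, stepSum_append, stepSum_append]
    simp [stepSum]; ring
  have key : (Nat.gcd a b : ℤ) ∣ stepSum m := by
    have hga : (Nat.gcd a b : ℤ) ∣ (a : ℤ) := Int.natCast_dvd_natCast.mpr (Nat.gcd_dvd_left a b)
    have hgb : (Nat.gcd a b : ℤ) ∣ (b : ℤ) := Int.natCast_dvd_natCast.mpr (Nat.gcd_dvd_right a b)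
    have hrw : stepSum m = patTerm T p (l₁.length + 1 + m.length)
        - patTerm T p l₁.length - εa * a := by linarith
    rw [hrw]
    exact dvd_sub (dvd_sub (hgb.trans hdivb) (hga.trans hdiva)) (hga.mul_left εa)
  refine ⟨key, fun hab => ?_⟩
  subst hab
  simpa using key
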